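/- Every simple graph on n vertices with strictly more than (1/2)(1 + sqrt(4n-3)) · n / 2 edges contains a cycle of length 4. In particular, any simple graph with at least n^{1.5} edges (for n ≥ 2) contains a 4-cycle. -/
import Mathlib

open scoped Classical

/-- `G` contains a cycle of length 4: four distinct vertices that are cyclically adjacent. -/
def HasFourCycle {V : Type*} (G : SimpleGraph V) : Prop :=
  ∃ v₁ v₂ v₃ v₄ : V, v₁ ≠ v₂ ∧ v₁ ≠ v₃ ∧ v₁ ≠ v₄ ∧ v₂ ≠ v₃ ∧ v₂ ≠ v₄ ∧ v₃ ≠ v₄ ∧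
    G.Adj v₁ v₂ ∧ G.Adj v₂ v₃ ∧ G.Adj v₃ v₄ ∧ G.Adj v₄ v₁

lemma key_count {V : Type*} [Fintype V] (G : SimpleGraph V) (h : ¬ HasFourCycle G) :
    ∑ v, (G.degree v).choose 2 ≤ (Fintype.card V).choose 2 := by
  classical
  set s : Finset (Finset V) := Finset.univ.powersetCard 2 with hs
  have h1 : ∀ v : V, (G.degree v).choose 2
      = (s.filter (· ⊆ G.neighborFinset v)).card := by
    intro v
    rw [← G.card_neighborFinset_eq_degree, ← Finset.card_powersetCard]
    congr 1
    ext p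
    simp only [hs, Finset.mem_powersetCard, Finset.mem_filter, Finset.subset_univ, true_and]
    tauto
  calc ∑ v, (G.degree v).choose 2
      = ∑ v, ∑ p ∈ s, if p ⊆ G.neighborFinset v then 1 else 0 := by
        simp only [h1]
        exact Finset.sum_congr rfl fun v _ => Finset.card_filter _ _
    _ = ∑ p ∈ s, ∑ v, if p ⊆ G.neighborFinset v then 1 else 0 := Finset.sum_comm
    _ ≤ ∑ p ∈ s, 1 := by
        apply Finset.sum_le_sum
        intro p hp
        rw [← Finset.card_filter]
        apply Finset.card_le_one.2
        intro a ha b hb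
        simp only [Finset.mem_filter] at ha hb
        rw [hs, Finset.mem_powersetCard] at hp
        obtain ⟨u, w, huw, rfl⟩ := Finset.card_eq_two.1 hp.2
        have hua : G.Adj a u := by
          rw [← SimpleGraph.mem_neighborFinset]; exact ha.2 (by simp)
        have hwa : G.Adj a w := by
          rw [← SimpleGraph.mem_neighborFinset]; exact ha.2 (by simp)
        have hub : G.Adj b u := by
          rw [← SimpleGraph.mem_neighborFinset]; exact hb.2 (by simp)
        have hwb : G.Adj b w := by
          rw [← SimpleGraph.mem_neighborFinset]; exact hb.2 (by simp)
        by_contra hab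
        exact h ⟨u, a, w, b, (G.ne_of_adj hua).symm, huw, (G.ne_of_adj hub).symm,
          G.ne_of_adj hwa, hab, hwb.ne', hua.symm, hwa, hwb.symm, hub⟩
    _ = (Fintype.card V).choose 2 := by
        simp [hs, Finset.card_powersetCard, Finset.card_univ]

lemma key_real {V : Type*} [Fintype V] (G : SimpleGraph V) (h : ¬ HasFourCycle G) :
    4 * (G.edgeFinset.card : ℝ) ^ 2 ≤
      (Fintype.card V : ℝ) ^ 2 * (Fintype.card V - 1)
        + 2 * Fintype.card V * G.edgeFinset.card := by
  classical
  set n : ℕ := Fintype.card V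
  have hdeg : ∑ v, (G.degree v : ℝ) = 2 * G.edgeFinset.card := by
    rw [← Nat.cast_sum]
    norm_cast
    exact G.sum_degrees_eq_twice_card_edges
  have hch : ∑ v, ((G.degree v : ℝ) * (G.degree v - 1) / 2) ≤ (n : ℝ) * (n - 1) / 2 := by
    have := key_count G h
    calc ∑ v, ((G.degree v : ℝ) * (G.degree v - 1) / 2)
        = ∑ v, ((G.degree v).choose 2 : ℝ) := by
          refine Finset.sum_congr rfl fun v _ => ?_
          rw [Nat.cast_choose_two]
      _ = ((∑ v, (G.degree v).choose 2 : ℕ) : ℝ) := by rw [Nat.cast_sum]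
      _ ≤ ((n.choose 2 : ℕ) : ℝ) := by exact_mod_cast this
      _ = (n : ℝ) * (n - 1) / 2 := by rw [Nat.cast_choose_two]
  have hcs : (∑ v, (G.degree v : ℝ)) ^ 2 ≤ (n : ℝ) * ∑ v, (G.degree v : ℝ) ^ 2 := by
    have := sq_sum_le_card_mul_sum_sq (s := (Finset.univ : Finset V))
      (f := fun v => (G.degree v : ℝ))
    simpa [Finset.card_univ] using this
  have hsq : ∑ v, (G.degree v : ℝ) ^ 2
      = 2 * ∑ v, ((G.degree v : ℝ) * (G.degree v - 1) / 2) + ∑ v, (G.degree v : ℝ) := by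
    rw [Finset.mul_sum, ← Finset.sum_add_distrib]
    refine Finset.sum_congr rfl fun v _ => by ring
  rw [hdeg] at hcs
  rw [hsq, hdeg] at hcs
  nlinarith [hch, hcs, Nat.cast_nonneg (α := ℝ) n]

/-- Kővári–Sós–Turán-type bound: a simple graph on `n` vertices with more than
`(1/2)(1 + √(4n-3)) · n / 2` edges contains a 4-cycle; in particular (for `n ≥ 2`)
any simple graph with at least `n^{3/2}` edges contains a 4-cycle. -/
theorem fourCycle_of_many_edges {V : Type*} [Fintype V] (G : SimpleGraph V) :
    ((1 / 2 : ℝ) * (1 + Real.sqrt (4 * Fintype.card V - 3)) * Fintype.card V / 2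
        < (G.edgeFinset.card : ℝ) → HasFourCycle G) ∧
    (2 ≤ Fintype.card V →
      (Fintype.card V : ℝ) ^ (3 / 2 : ℝ) ≤ (G.edgeFinset.card : ℝ) → HasFourCycle G) := by
  classical
  set n : ℕ := Fintype.card V with hn
  set e : ℝ := (G.edgeFinset.card : ℝ) with he
  have he0 : 0 ≤ e := Nat.cast_nonneg _
  have main : (1 / 2 : ℝ) * (1 + Real.sqrt (4 * n - 3)) * n / 2 < e → HasFourCycle G := by
    intro hlt
    by_contra h
    have hkey := key_real G h
    rcases Nat.eq_zero_or_pos n with h0 | h1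
    · -- n = 0 : no edges
      have : e ≤ 0 := by
        rw [he]
        have hV : IsEmpty V := Fintype.card_eq_zero_iff.mp h0
        have : G.edgeFinset = ∅ := Finset.eq_empty_of_isEmpty _
        simp [this]
      have hbnd : (0:ℝ) ≤ (1 / 2 : ℝ) * (1 + Real.sqrt (4 * n - 3)) * n / 2 := by
        positivity
      linarith
    · set t : ℝ := Real.sqrt (4 * n - 3) with ht
      have hn1 : (1:ℝ) ≤ n := by exact_mod_cast h1
      have harg : (0:ℝ) ≤ 4 * n - 3 := by linarith
      have ht2 : t ^ 2 = 4 * n - 3 := Real.sq_sqrt harg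
      have ht0 : 0 ≤ t := Real.sqrt_nonneg _
      have ht1 : 1 ≤ t := by nlinarith
      nlinarith [hkey, hlt, mul_pos (lt_of_lt_of_le zero_lt_one hn1)
        (lt_of_lt_of_le zero_lt_one ht1)]
  refine ⟨main, fun h2 hge => main ?_⟩
  have hn2 : (2:ℝ) ≤ n := by exact_mod_cast h2
  have hn0 : (0:ℝ) < n := by linarith
  have hrw : (n : ℝ) ^ (3 / 2 : ℝ) = n * Real.sqrt n := by
    rw [show (3/2 : ℝ) = 1 + 1/2 by norm_num, Real.rpow_add hn0, Real.rpow_one,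
      ← Real.sqrt_eq_rpow]
  set u : ℝ := Real.sqrt n with hu
  have hu2 : u ^ 2 = n := Real.sq_sqrt (le_of_lt hn0)
  have hu0 : 0 ≤ u := Real.sqrt_nonneg _
  set t : ℝ := Real.sqrt (4 * n - 3) with ht
  have ht2 : t ^ 2 = 4 * n - 3 := Real.sq_sqrt (by linarith)
  have ht0 : 0 ≤ t := Real.sqrt_nonneg _
  have hu1 : 1 < u := by nlinarith
  have htlt : t < 4 * u - 1 := by nlinarith
  calc (1 / 2 : ℝ) * (1 + t) * n / 2 < n * u := by nlinarith
    _ = (n : ℝ) ^ (3 / 2 : ℝ) := hrw.symm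
    _ ≤ e := hge
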